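/- Let M̄ be a real symmetric m×m matrix with nonnegative entries, and let M̃ denote its comparison matrix, defined by M̃_{ii} = M̄_{ii} and M̃_{ij} = −M̄_{ij} for i ≠ j. If M̃ is positive semidefinite, then the function X ↦ Σ_{i,j=1}^m M̄_{ij} |x_iᵀ x_j| is convex on ℝ^{n×m}, where x_1, ..., x_m are the columns of X. Moreover, for every symmetric matrix M with M_{ii} = M̄_{ii} and |M_{ij}| ≤ M̄_{ij} for i ≠ j, the minimum eigenvalue of M is at least the minimum eigenvalue of M̃. -/

import Mathlib

open Matrix

private lemma dot_compare {m : ℕ} (Mbar Mtilde M : Matrix (Fin m) (Fin m) ℝ)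
    (hMt : ∀ i j, Mtilde i j = if i = j then Mbar i j else -(Mbar i j))
    (hdiag : ∀ i, M i i = Mbar i i) (hoff : ∀ i j, i ≠ j → |M i j| ≤ Mbar i j)
    (x : Fin m → ℝ) :
    (fun i => |x i|) ⬝ᵥ (Mtilde *ᵥ fun i => |x i|) ≤ x ⬝ᵥ (M *ᵥ x) := by
  simp only [dotProduct, mulVec, Finset.mul_sum]
  refine Finset.sum_le_sum fun i _ => Finset.sum_le_sum fun j _ => ?_
  rcases eq_or_ne i j with h|h
  · subst h
    rw [hMt i i, if_pos rfl, hdiag i, mul_left_comm, abs_mul_abs_self, mul_left_comm]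
  · rw [hMt i j, if_neg h]
    have h1 : |M i j| ≤ Mbar i j := hoff i j h
    have h2 : |M i j * (x i * x j)| ≤ Mbar i j * (|x i| * |x j|) := by
      rw [abs_mul, abs_mul]
      exact mul_le_mul_of_nonneg_right h1 (by positivity)
    nlinarith [neg_abs_le (M i j * (x i * x j))]

private lemma row_quad {m : ℕ} (B : Matrix (Fin m) (Fin m) ℝ) (x : Fin m → ℝ) :
    ∑ i, ∑ j, (Bᴴ * B) i j * (x i * x j) = ∑ l, ((B *ᵥ x) l)^2 := by
  have key : x ⬝ᵥ ((Bᴴ * B) *ᵥ x) = (B *ᵥ x) ⬝ᵥ (B *ᵥ x) := by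
    rw [← mulVec_mulVec, dotProduct_mulVec, conjTranspose_eq_transpose_of_trivial,
      vecMul_transpose]
  calc ∑ i, ∑ j, (Bᴴ * B) i j * (x i * x j)
      = x ⬝ᵥ ((Bᴴ * B) *ᵥ x) := by
        simp only [dotProduct, mulVec, Finset.mul_sum]
        exact Finset.sum_congr rfl fun i _ => Finset.sum_congr rfl fun j _ => by ring
    _ = (B *ᵥ x) ⬝ᵥ (B *ᵥ x) := key
    _ = ∑ l, ((B *ᵥ x) l)^2 := by
        simp only [dotProduct, sq]

private lemma quad_form {n m : ℕ} (B : Matrix (Fin m) (Fin m) ℝ)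
    (W : Matrix (Fin n) (Fin m) ℝ) :
    ∑ i, ∑ j, (Bᴴ * B) i j * (Wᵀ * W) i j = ∑ k, ∑ l, ((W * Bᴴ) k l)^2 := by
  calc ∑ i, ∑ j, (Bᴴ * B) i j * (Wᵀ * W) i j
      = ∑ i, ∑ j, ∑ k, (Bᴴ * B) i j * (W k i * W k j) := by
        refine Finset.sum_congr rfl fun i _ => Finset.sum_congr rfl fun j _ => ?_
        rw [show (Wᵀ * W) i j = ∑ k, W k i * W k j from by
          rw [Matrix.mul_apply]; rfl]
        rw [Finset.mul_sum]
    _ = ∑ k, ∑ i, ∑ j, (Bᴴ * B) i j * (W k i * W k j) := by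
        rw [show (∑ i, ∑ j, ∑ k, (Bᴴ * B) i j * (W k i * W k j) : ℝ)
            = ∑ i : Fin m, ∑ k, ∑ j, (Bᴴ * B) i j * (W k i * W k j) from
          Finset.sum_congr rfl fun i _ => Finset.sum_comm]
        exact Finset.sum_comm
    _ = ∑ k, ∑ l, ((W * Bᴴ) k l)^2 := by
        refine Finset.sum_congr rfl fun k _ => ?_
        rw [row_quad B (fun i => W k i)]
        refine Finset.sum_congr rfl fun l _ => ?_
        congr 1
        simp [mulVec, Matrix.mul_apply, dotProduct, conjTranspose_apply, mul_comm]

private lemma sign_mul_self' (x : ℝ) : Real.sign x * x = |x| := by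
  rcases lt_trichotomy x 0 with h|h|h
  · rw [Real.sign_of_neg h, abs_of_neg h]; ring
  · simp [h]
  · rw [Real.sign_of_pos h, abs_of_pos h]; ring

private lemma abs_sign_le (x : ℝ) : |Real.sign x| ≤ 1 := by
  rcases lt_trichotomy x 0 with h|h|h
  · simp [Real.sign_of_neg h]
  · simp [h]
  · simp [Real.sign_of_pos h]

private lemma dot_self_pos {m : ℕ} {v : Fin m → ℝ} (hv : v ≠ 0) : 0 < v ⬝ᵥ v := by
  have h0 : 0 ≤ v ⬝ᵥ v := Finset.sum_nonneg fun i _ => mul_self_nonneg _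
  rcases h0.lt_or_eq with h|h
  · exact h
  · exact absurd (dotProduct_self_eq_zero.mp h.symm) hv

private lemma eig_lb {m : ℕ} {A : Matrix (Fin m) (Fin m) ℝ} (hA : A.IsHermitian)
    {c : ℝ} (h : ∀ x : Fin m → ℝ, c * (x ⬝ᵥ x) ≤ x ⬝ᵥ (A *ᵥ x)) (k : Fin m) :
    c ≤ hA.eigenvalues k := by
  set v : Fin m → ℝ := ⇑(hA.eigenvectorBasis k) with hv
  have hvne : v ≠ 0 := by
    intro h0
    exact hA.eigenvectorBasis.orthonormal.ne_zero k (by ext i; exact congrFun h0 i)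
  have hAv : A *ᵥ v = hA.eigenvalues k • v := hA.mulVec_eigenvectorBasis k
  have := h v
  rw [hAv, dotProduct_smul, smul_eq_mul] at this
  exact le_of_mul_le_mul_right (by simpa [mul_comm] using this) (dot_self_pos hvne)

private lemma rayleigh_lb {m : ℕ} {A : Matrix (Fin m) (Fin m) ℝ} (hA : A.IsHermitian)
    (x : Fin m → ℝ) :
    (⨅ k, hA.eigenvalues k) * (x ⬝ᵥ x) ≤ x ⬝ᵥ (A *ᵥ x) := by
  set U : Matrix (Fin m) (Fin m) ℝ := (hA.eigenvectorUnitary : Matrix (Fin m) (Fin m) ℝ) with hU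
  have hspec : A = U * diagonal (RCLike.ofReal ∘ hA.eigenvalues) * star U := hA.spectral_theorem
  have hUU : U * star U = 1 := Unitary.mul_star_self_of_mem hA.eigenvectorUnitary.2
  set y : Fin m → ℝ := star U *ᵥ x with hy
  have hxv : x ᵥ* U = y := by
    rw [hy, star_eq_conjTranspose]
    ext i
    simp [vecMul, mulVec, dotProduct, conjTranspose_apply, mul_comm]
  have hxy : x ⬝ᵥ x = y ⬝ᵥ y := by
    have : y ⬝ᵥ y = (x ᵥ* U) ⬝ᵥ (star U *ᵥ x) := by rw [hxv, hy]
    rw [this, ← dotProduct_mulVec, mulVec_mulVec, hUU, one_mulVec]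
  have hq : x ⬝ᵥ (A *ᵥ x) = ∑ k, hA.eigenvalues k * (y k * y k) := by
    calc x ⬝ᵥ (A *ᵥ x)
        = x ⬝ᵥ ((U * diagonal (RCLike.ofReal ∘ hA.eigenvalues) * star U) *ᵥ x) := by
          rw [← hspec]
      _ = ∑ k, hA.eigenvalues k * (y k * y k) := by
          rw [dotProduct_mulVec, ← vecMul_vecMul, ← vecMul_vecMul, hxv, ← dotProduct_mulVec, ← hy]
          simp only [dotProduct, vecMul_diagonal]
          refine Finset.sum_congr rfl fun k _ => ?_
          simp only [Function.comp_apply, RCLike.ofReal_real_eq_id, id_eq]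
          ring
  rw [hq, hxy, dotProduct, Finset.mul_sum]
  refine Finset.sum_le_sum fun k _ => ?_
  have h1 : (⨅ j, hA.eigenvalues j) ≤ hA.eigenvalues k :=
    ciInf_le (Set.Finite.bddBelow (Set.finite_range _)) k
  have := mul_self_nonneg (y k)
  nlinarith

/-- If the comparison matrix `M̃` of an entrywise nonnegative symmetric `M̄` is
positive semidefinite, then `X ↦ Σᵢⱼ M̄ᵢⱼ |xᵢᵀxⱼ|` is convex; moreover every symmetric
`M` with the same diagonal as `M̄` and `|Mᵢⱼ| ≤ M̄ᵢⱼ` off the diagonal has minimum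
eigenvalue at least the minimum eigenvalue of `M̃`. -/
theorem comparison_matrix_psd_convex {n m : ℕ}
    (Mbar : Matrix (Fin m) (Fin m) ℝ)
    (hsym : Mbar.IsSymm) (hnn : ∀ i j, 0 ≤ Mbar i j)
    (Mtilde : Matrix (Fin m) (Fin m) ℝ)
    (hMt : ∀ i j, Mtilde i j = if i = j then Mbar i j else -(Mbar i j))
    (hpsd : Mtilde.PosSemidef) :
    ConvexOn ℝ Set.univ
      (fun X : Matrix (Fin n) (Fin m) ℝ => ∑ i, ∑ j, Mbar i j * |(Xᵀ * X) i j|) ∧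
    ∀ (M : Matrix (Fin m) (Fin m) ℝ) (hM : M.IsHermitian),
      (∀ i, M i i = Mbar i i) → (∀ i j, i ≠ j → |M i j| ≤ Mbar i j) →
      (⨅ k, hpsd.isHermitian.eigenvalues k) ≤ ⨅ k, hM.eigenvalues k := by
  constructor
  · refine ⟨convex_univ, ?_⟩
    intro X _ Y _ a b ha hb hab
    set Z : Matrix (Fin n) (Fin m) ℝ := a • X + b • Y with hZ
    set M : Matrix (Fin m) (Fin m) ℝ :=
      Matrix.of (fun i j =>
        if i = j then Mbar i i else Real.sign ((Zᵀ * Z) i j) * Mbar i j) with hMdef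
    have hMij : ∀ i j, M i j =
        if i = j then Mbar i i else Real.sign ((Zᵀ * Z) i j) * Mbar i j := fun i j => rfl
    have hZsymm : ∀ i j, (Zᵀ * Z) i j = (Zᵀ * Z) j i := by
      intro i j
      simp only [Matrix.mul_apply, transpose_apply]
      exact Finset.sum_congr rfl fun k _ => mul_comm _ _
    have hMbar_symm : ∀ i j, Mbar j i = Mbar i j := fun i j => congrFun (congrFun hsym i) j
    have hdiagM : ∀ i, M i i = Mbar i i := fun i => by rw [hMij, if_pos rfl]
    have hoffM : ∀ i j, i ≠ j → |M i j| ≤ Mbar i j := by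
      intro i j hij
      rw [hMij, if_neg hij, abs_mul]
      calc |Real.sign ((Zᵀ * Z) i j)| * |Mbar i j| ≤ 1 * |Mbar i j| :=
            mul_le_mul_of_nonneg_right (abs_sign_le _) (abs_nonneg _)
        _ = Mbar i j := by rw [one_mul, abs_of_nonneg (hnn i j)]
    have hboxM : ∀ i j, |M i j| ≤ Mbar i j := by
      intro i j
      rcases eq_or_ne i j with rfl|h
      · rw [hdiagM i, abs_of_nonneg (hnn i i)]
      · exact hoffM i j h
    have hherm : M.IsHermitian := by
      ext i j
      simp only [conjTranspose_apply, star_trivial]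
      rcases eq_or_ne i j with rfl|h
      · rfl
      · rw [hMij j i, hMij i j, if_neg (Ne.symm h), if_neg h, hZsymm j i, hMbar_symm j i]
    have hpsdM : M.PosSemidef := by
      refine .of_dotProduct_mulVec_nonneg hherm fun x => ?_
      have h0 := hpsd.dotProduct_mulVec_nonneg (fun i => |x i|)
      simp only [star_trivial] at h0 ⊢
      exact le_trans h0 (dot_compare Mbar Mtilde M hMt hdiagM hoffM x)
    open scoped MatrixOrder in
    obtain ⟨B, hB⟩ := CStarAlgebra.nonneg_iff_eq_star_mul_self.mp hpsdM.nonneg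
    have hbound : ∀ W : Matrix (Fin n) (Fin m) ℝ,
        ∑ i, ∑ j, M i j * (Wᵀ * W) i j ≤ ∑ i, ∑ j, Mbar i j * |(Wᵀ * W) i j| := by
      intro W
      refine Finset.sum_le_sum fun i _ => Finset.sum_le_sum fun j _ => ?_
      calc M i j * (Wᵀ * W) i j ≤ |M i j * (Wᵀ * W) i j| := le_abs_self _
        _ = |M i j| * |(Wᵀ * W) i j| := abs_mul _ _
        _ ≤ Mbar i j * |(Wᵀ * W) i j| :=
            mul_le_mul_of_nonneg_right (hboxM i j) (abs_nonneg _)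
    have hquad : ∀ W : Matrix (Fin n) (Fin m) ℝ,
        ∑ i, ∑ j, M i j * (Wᵀ * W) i j = ∑ k, ∑ l, ((W * Bᴴ) k l)^2 := by
      intro W
      rw [hB]
      exact quad_form B W
    have hfZ : ∑ i, ∑ j, Mbar i j * |(Zᵀ * Z) i j| = ∑ i, ∑ j, M i j * (Zᵀ * Z) i j := by
      refine Finset.sum_congr rfl fun i _ => Finset.sum_congr rfl fun j _ => ?_
      rcases eq_or_ne i j with rfl|h
      · rw [hdiagM i]
        have hnn2 : 0 ≤ (Zᵀ * Z) i i := by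
          rw [Matrix.mul_apply]
          exact Finset.sum_nonneg fun k _ => mul_self_nonneg _
        rw [abs_of_nonneg hnn2]
      · rw [hMij, if_neg h, mul_comm (Real.sign ((Zᵀ * Z) i j)) (Mbar i j), mul_assoc,
          sign_mul_self']
    have hlin : ∀ k l, (Z * Bᴴ) k l = a * (X * Bᴴ) k l + b * (Y * Bᴴ) k l := by
      intro k l
      rw [hZ, Matrix.add_mul, Matrix.smul_mul, Matrix.smul_mul]
      simp
    simp only [smul_eq_mul]
    calc ∑ i, ∑ j, Mbar i j * |(Zᵀ * Z) i j|
        = ∑ k, ∑ l, ((Z * Bᴴ) k l)^2 := by rw [hfZ, hquad]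
      _ ≤ a * (∑ k, ∑ l, ((X * Bᴴ) k l)^2) + b * (∑ k, ∑ l, ((Y * Bᴴ) k l)^2) := by
          rw [Finset.mul_sum, Finset.mul_sum, ← Finset.sum_add_distrib]
          refine Finset.sum_le_sum fun k _ => ?_
          rw [Finset.mul_sum, Finset.mul_sum, ← Finset.sum_add_distrib]
          refine Finset.sum_le_sum fun l _ => ?_
          rw [hlin k l]
          nlinarith [mul_nonneg (mul_nonneg ha hb)
            (sq_nonneg ((X * Bᴴ) k l - (Y * Bᴴ) k l)), sq_nonneg ((X * Bᴴ) k l),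
            sq_nonneg ((Y * Bᴴ) k l)]
      _ ≤ a * (∑ i, ∑ j, Mbar i j * |(Xᵀ * X) i j|)
            + b * (∑ i, ∑ j, Mbar i j * |(Yᵀ * Y) i j|) := by
          gcongr
          · rw [← hquad X]; exact hbound X
          · rw [← hquad Y]; exact hbound Y
  · intro M hM hdiag hoff
    have key : ∀ x : Fin m → ℝ,
        (⨅ k, hpsd.isHermitian.eigenvalues k) * (x ⬝ᵥ x) ≤ x ⬝ᵥ (M *ᵥ x) := by
      intro x
      have h1 : x ⬝ᵥ x = (fun i => |x i|) ⬝ᵥ (fun i => |x i|) :=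
        (Finset.sum_congr rfl fun i _ => (abs_mul_abs_self (x i)).symm)
      rw [h1]
      exact le_trans (rayleigh_lb hpsd.isHermitian _)
        (dot_compare Mbar Mtilde M hMt hdiag hoff x)
    cases isEmpty_or_nonempty (Fin m) with
    | inl hemp =>
        rw [iInf, iInf, Set.range_eq_empty, Set.range_eq_empty]
    | inr hne =>
        exact le_ciInf fun k => eig_lb hM key k
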